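/- Let μ ∈ ℂ with μ ∉ {0, 1}, a = (μ+μ⁻¹)/2, b = i(μ⁻¹−μ)/2, regarded as quaternions in the real span of 1 and i. Let n ∈ ℍ with Re n = 0 and n² = −1, φ ∈ ℍ \ {0}, and T = ½(n·φ·(a−1)·φ⁻¹ + φ·b·φ⁻¹). Set ρ̂ = φ·((1−a)/2)·φ⁻¹ (invertible since a ≠ 1) and T̂ = T·ρ̂⁻¹. Then T̂² + T̂·n + n·T̂ = ρ̂⁻¹, and T²·ρ̂⁻¹ commutes with n. (Key identities in the proof of Theorem 6.1.) -/

import Mathlib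

/- Key identities in the proof of Theorem 6.1:
T̂² + T̂n + nT̂ = ρ̂⁻¹ and [T²ρ̂⁻¹, n] = 0, with ρ̂ = φ((1−a)/2)φ⁻¹, T̂ = Tρ̂⁻¹. -/

noncomputable section
open Complex

local notation "ℍ" => Quaternion ℝ

/-- Embedding of ℂ into ℍ as the real span of 1 and i. -/
def cq (z : ℂ) : ℍ := ⟨z.re, z.im, 0, 0⟩

/-- a = (μ+μ⁻¹)/2. -/
def aμ (μ : ℂ) : ℂ := (μ + μ⁻¹) / 2

/-- b = i(μ⁻¹−μ)/2. -/
def bμ (μ : ℂ) : ℂ := Complex.I * (μ⁻¹ - μ) / 2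

/-- T = ½(n·φ·(a−1)·φ⁻¹ + φ·b·φ⁻¹). -/
def Tq (μ : ℂ) (n φ : ℍ) : ℍ :=
  (n * (φ * cq (aμ μ - 1) * φ⁻¹) + φ * cq (bμ μ) * φ⁻¹) / 2

/-- ρ̂ = φ·((1−a)/2)·φ⁻¹. -/
def ρhat (μ : ℂ) (φ : ℍ) : ℍ := φ * cq ((1 - aμ μ) / 2) * φ⁻¹

/-- T̂ = T·ρ̂⁻¹. -/
def That (μ : ℂ) (n φ : ℍ) : ℍ := Tq μ n φ * (ρhat μ φ)⁻¹

/-! ### Auxiliary lemmas -/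

attribute [local simp] Quaternion.re_zero Quaternion.imI_zero Quaternion.imJ_zero Quaternion.imK_zero Quaternion.im_zero Quaternion.re_one Quaternion.imI_one Quaternion.imJ_one Quaternion.imK_one Quaternion.im_one

@[simp] lemma cq_re (z : ℂ) : (cq z).re = z.re := rfl
@[simp] lemma cq_imI (z : ℂ) : (cq z).imI = z.im := rfl
@[simp] lemma cq_imJ (z : ℂ) : (cq z).imJ = 0 := rfl
@[simp] lemma cq_imK (z : ℂ) : (cq z).imK = 0 := rfl

lemma cq_mul' (z w : ℂ) : cq (z*w) = cq z * cq w := by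
  ext <;> simp [Quaternion.re_mul, Quaternion.imI_mul, Quaternion.imJ_mul, Quaternion.imK_mul]

lemma cq_add' (z w : ℂ) : cq (z+w) = cq z + cq w := by
  ext <;> simp

lemma cq_one' : cq 1 = 1 := by ext <;> simp

lemma cq_neg' (z : ℂ) : cq (-z) = -cq z := by ext <;> simp

lemma cq_two : cq (2:ℂ) = 2 := by
  rw [show (2:ℂ) = 1+1 by norm_num, cq_add', cq_one']; norm_num

lemma cq_negtwo : cq (-2:ℂ) = -2 := by
  rw [show (-2:ℂ) = -(2:ℂ) by norm_num, cq_neg', cq_two]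

lemma cq_ne_zero' {z : ℂ} (hz : z ≠ 0) : cq z ≠ 0 := by
  intro h
  apply hz
  rw [Quaternion.ext_iff] at h
  simp at h
  exact Complex.ext h.1 h.2

lemma cq_inv' {z : ℂ} (hz : z ≠ 0) : cq z⁻¹ = (cq z)⁻¹ := by
  apply eq_inv_of_mul_eq_one_left
  rw [← cq_mul', inv_mul_cancel₀ hz, cq_one']

lemma two_ne_zero_q : (2:ℍ) ≠ 0 := by
  intro h
  rw [show (2:ℍ) = 1+1 by norm_num] at h
  have := congrArg QuaternionAlgebra.re h
  simp at this

lemma re_mul_comm' (a b : ℍ) : (a*b).re = (b*a).re := by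
  simp [Quaternion.re_mul]; ring

def iq : ℍ := ⟨0, 1, 0, 0⟩

@[simp] lemma iq_re : iq.re = 0 := rfl
@[simp] lemma iq_imI : iq.imI = 1 := rfl
@[simp] lemma iq_imJ : iq.imJ = 0 := rfl
@[simp] lemma iq_imK : iq.imK = 0 := rfl

lemma cq_decomp (z : ℂ) : cq z = ((z.re : ℝ) : ℍ) + ((z.im : ℝ) : ℍ) * iq := by
  ext <;> simp [Quaternion.imI_mul, Quaternion.re_mul, Quaternion.imJ_mul, Quaternion.imK_mul]

lemma iq_sq : iq * iq = -1 := by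
  ext <;> simp [Quaternion.re_mul, Quaternion.imI_mul, Quaternion.imJ_mul, Quaternion.imK_mul]

lemma conj_cq (φ : ℍ) (hφ : φ ≠ 0) (z : ℂ) :
    φ * cq z * φ⁻¹ = ((z.re : ℝ) : ℍ) + ((z.im : ℝ) : ℍ) * (φ * iq * φ⁻¹) := by
  rw [cq_decomp, mul_add, add_mul]
  congr 1
  · rw [Quaternion.mul_coe_eq_smul, smul_mul_assoc, mul_inv_cancel₀ hφ,
      ← Quaternion.coe_one, Quaternion.smul_coe, mul_one]
  · rw [show φ * (((z.im:ℝ):ℍ) * iq) = ((z.im:ℝ):ℍ) * (φ * iq) by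
      rw [← mul_assoc, Quaternion.mul_coe_eq_smul, Quaternion.coe_mul_eq_smul, smul_mul_assoc],
      mul_assoc]

lemma a_ne_one' {μ : ℂ} (hμ0 : μ ≠ 0) (hμ1 : μ ≠ 1) : 1 - aμ μ ≠ 0 := by
  intro h
  apply hμ1
  have h2 : (μ - 1)^2 = 0 := by
    unfold aμ at h
    field_simp [aμ] at h
    linear_combination -h
  exact sub_eq_zero.mp (pow_eq_zero_iff two_ne_zero |>.mp h2)

lemma kappa_sq' {μ : ℂ} (hμ0 : μ ≠ 0) (h : 1 - aμ μ ≠ 0) :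
    (bμ μ / (1 - aμ μ))^2 + 1 = ((1 - aμ μ)/2)⁻¹ := by
  have hI := Complex.I_sq
  field_simp [h]
  unfold aμ bμ at *
  field_simp at h ⊢
  linear_combination (1 - μ^2)^2 * hI

lemma comm_key (J n : ℍ) (hJr : J.re = 0) (hnr : n.re = 0)
    (hJ2 : J.imI^2 + J.imJ^2 + J.imK^2 = 1) (hn2 : n.imI^2 + n.imJ^2 + n.imK^2 = 1)
    (k l r s : ℝ) (h0 : 2*k*l*r + s*(k^2 - l^2 + 1) = 0) :
    (((k:ℍ) + (l:ℍ)*J - n) * ((r:ℍ) + (s:ℍ)*J) * ((k:ℍ) + (l:ℍ)*J - n)) * n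
      = n * (((k:ℍ) + (l:ℍ)*J - n) * ((r:ℍ) + (s:ℍ)*J) * ((k:ℍ) + (l:ℍ)*J - n)) := by
  ext
  · simp only [Quaternion.re_mul, Quaternion.imI_mul, Quaternion.imJ_mul, Quaternion.imK_mul,
      Quaternion.re_add, Quaternion.imI_add, Quaternion.imJ_add, Quaternion.imK_add,
      Quaternion.re_sub, Quaternion.imI_sub, Quaternion.imJ_sub, Quaternion.imK_sub,
      Quaternion.re_coe, Quaternion.imI_coe, Quaternion.imJ_coe, Quaternion.imK_coe,
      hJr, hnr]
    ring
  · simp only [Quaternion.re_mul, Quaternion.imI_mul, Quaternion.imJ_mul, Quaternion.imK_mul,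
      Quaternion.re_add, Quaternion.imI_add, Quaternion.imJ_add, Quaternion.imK_add,
      Quaternion.re_sub, Quaternion.imI_sub, Quaternion.imJ_sub, Quaternion.imK_sub,
      Quaternion.re_coe, Quaternion.imI_coe, Quaternion.imJ_coe, Quaternion.imK_coe,
      hJr, hnr]
    linear_combination (2*s*n.imK*J.imJ - 2*s*n.imJ*J.imK) * hn2
      + (-2*l^2*s*n.imK*J.imJ + 2*l^2*s*n.imJ*J.imK) * hJ2
      + (2*n.imK*J.imJ - 2*n.imJ*J.imK) * h0
  · simp only [Quaternion.re_mul, Quaternion.imI_mul, Quaternion.imJ_mul, Quaternion.imK_mul,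
      Quaternion.re_add, Quaternion.imI_add, Quaternion.imJ_add, Quaternion.imK_add,
      Quaternion.re_sub, Quaternion.imI_sub, Quaternion.imJ_sub, Quaternion.imK_sub,
      Quaternion.re_coe, Quaternion.imI_coe, Quaternion.imJ_coe, Quaternion.imK_coe,
      hJr, hnr]
    linear_combination (-2*s*n.imK*J.imI + 2*s*n.imI*J.imK) * hn2
      + (2*l^2*s*n.imK*J.imI - 2*l^2*s*n.imI*J.imK) * hJ2
      + (-2*n.imK*J.imI + 2*n.imI*J.imK) * h0
  · simp only [Quaternion.re_mul, Quaternion.imI_mul, Quaternion.imJ_mul, Quaternion.imK_mul,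
      Quaternion.re_add, Quaternion.imI_add, Quaternion.imJ_add, Quaternion.imK_add,
      Quaternion.re_sub, Quaternion.imI_sub, Quaternion.imJ_sub, Quaternion.imK_sub,
      Quaternion.re_coe, Quaternion.imI_coe, Quaternion.imJ_coe, Quaternion.imK_coe,
      hJr, hnr]
    linear_combination (2*s*n.imJ*J.imI - 2*s*n.imI*J.imJ) * hn2
      + (-2*l^2*s*n.imJ*J.imI + 2*l^2*s*n.imI*J.imJ) * hJ2
      + (2*n.imJ*J.imI - 2*n.imI*J.imJ) * h0

theorem stmt_10 (μ : ℂ) (hμ0 : μ ≠ 0) (hμ1 : μ ≠ 1)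
    (n : ℍ) (hre : n.re = 0) (hsq : n * n = -1)
    (φ : ℍ) (hφ : φ ≠ 0) :
    ρhat μ φ ≠ 0
    ∧ That μ n φ * That μ n φ + That μ n φ * n + n * That μ n φ = (ρhat μ φ)⁻¹
    ∧ (Tq μ n φ * Tq μ n φ * (ρhat μ φ)⁻¹) * n
        = n * (Tq μ n φ * Tq μ n φ * (ρhat μ φ)⁻¹) := by
  have h1a : 1 - aμ μ ≠ 0 := a_ne_one' hμ0 hμ1
  set α : ℂ := (1 - aμ μ) / 2 with hαdef
  have hα : α ≠ 0 := div_ne_zero h1a two_ne_zero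
  set κ : ℂ := bμ μ / (1 - aμ μ) with hκdef
  have hκsq : κ^2 + 1 = α⁻¹ := kappa_sq' hμ0 h1a
  have hρdef : ρhat μ φ = φ * cq α * φ⁻¹ := rfl
  have hρ0 : ρhat μ φ ≠ 0 := by
    rw [hρdef]
    exact mul_ne_zero (mul_ne_zero hφ (cq_ne_zero' hα)) (inv_ne_zero hφ)
  set K : ℍ := φ * cq κ * φ⁻¹ with hKdef
  -- ρ̂⁻¹ = φ (cq α⁻¹) φ⁻¹
  have hρinv : (ρhat μ φ)⁻¹ = φ * cq α⁻¹ * φ⁻¹ := by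
    rw [hρdef, mul_inv_rev, mul_inv_rev, inv_inv, cq_inv' hα, mul_assoc]
  -- product of conjugates
  have hconjmul : ∀ z w : ℂ, (φ * cq z * φ⁻¹) * (φ * cq w * φ⁻¹) = φ * cq (z*w) * φ⁻¹ := by
    intro z w
    rw [cq_mul']
    rw [show φ * cq z * φ⁻¹ * (φ * cq w * φ⁻¹) = φ * cq z * (φ⁻¹ * φ) * cq w * φ⁻¹ by
      simp only [mul_assoc]]
    rw [inv_mul_cancel₀ hφ, mul_one, mul_assoc φ, ← mul_assoc]
  -- T = (-n + K) * ρ̂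
  have hκα : κ * α = bμ μ / 2 := by
    rw [hκdef, hαdef]
    field_simp
  have hT : Tq μ n φ = (-n + K) * ρhat μ φ := by
    have ha1 : cq (aμ μ - 1) = (-2 : ℍ) * cq α := by
      rw [show aμ μ - 1 = (-2 : ℂ) * α by rw [hαdef]; ring, cq_mul', cq_negtwo]
    have hb1 : cq (bμ μ) = (2 : ℍ) * cq (κ * α) := by
      rw [show κ * α = bμ μ / 2 from hκα]
      rw [show bμ μ = (2:ℂ) * (bμ μ / 2) by ring, cq_mul', cq_two]
      rw [show (2:ℂ) * (bμ μ / 2) = bμ μ by ring]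
    rw [Tq, ha1, hb1, add_mul, neg_mul, hρdef]
    rw [show K * (φ * cq α * φ⁻¹) = φ * cq (κ * α) * φ⁻¹ from hconjmul κ α]
    rw [div_eq_iff two_ne_zero_q]
    noncomm_ring
  -- T̂ = -n + K
  have hThat : That μ n φ = -n + K := by
    rw [That, hT, mul_assoc, mul_inv_cancel₀ hρ0, mul_one]
  refine ⟨hρ0, ?_, ?_⟩
  · -- first identity
    rw [hThat]
    have e1 : (-n + K) * (-n + K) + (-n + K) * n + n * (-n + K) = K * K - n * n := by
      noncomm_ring
    rw [e1, hsq, sub_neg_eq_add, hKdef, hconjmul κ κ, hρinv]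
    rw [show φ * cq α⁻¹ * φ⁻¹ = φ * cq (κ*κ + 1) * φ⁻¹ by
      rw [show κ*κ + 1 = κ^2 + 1 by ring, hκsq]]
    rw [show cq (κ*κ + 1) = cq (κ*κ) + 1 by rw [cq_add', cq_one']]
    rw [mul_add, add_mul, mul_one, mul_inv_cancel₀ hφ]
  · -- second identity
    set J : ℍ := φ * iq * φ⁻¹ with hJdef
    have hJr : J.re = 0 := by
      rw [hJdef, re_mul_comm', ← mul_assoc, inv_mul_cancel₀ hφ, one_mul]
      simp [iq]
    have hJJ : J * J = -1 := by
      rw [hJdef, show φ * iq * φ⁻¹ * (φ * iq * φ⁻¹) = φ * iq * (φ⁻¹ * φ) * iq * φ⁻¹ by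
        simp only [mul_assoc], inv_mul_cancel₀ hφ, mul_one, mul_assoc φ, iq_sq]
      simp [mul_inv_cancel₀ hφ]
    have hJ2 : J.imI^2 + J.imJ^2 + J.imK^2 = 1 := by
      have := congrArg QuaternionAlgebra.re hJJ
      simp [Quaternion.re_mul, hJr] at this
      nlinarith [this]
    have hn2 : n.imI^2 + n.imJ^2 + n.imK^2 = 1 := by
      have := congrArg QuaternionAlgebra.re hsq
      simp [Quaternion.re_mul, hre] at this
      nlinarith [this]
    have h0 : 2*κ.re*κ.im*α.re + α.im*(κ.re^2 - κ.im^2 + 1) = 0 := by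
      have him : (α * (κ^2 + 1)).im = 0 := by
        rw [hκsq, mul_inv_cancel₀ hα]
        simp
      simp only [Complex.mul_im, Complex.mul_re, Complex.add_im, Complex.add_re,
        Complex.one_im, Complex.one_re, pow_two] at him ⊢
      linarith [him]
    have hKJ : K = (κ.re : ℍ) + (κ.im : ℍ) * J := by
      rw [hKdef, conj_cq φ hφ κ, hJdef]
    have hρJ : ρhat μ φ = (α.re : ℍ) + (α.im : ℍ) * J := by
      rw [hρdef, conj_cq φ hφ α, hJdef]
    have hXform : -n + K = ((κ.re : ℍ) + (κ.im : ℍ) * J - n) := by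
      rw [hKJ]; noncomm_ring
    have hTT : Tq μ n φ * Tq μ n φ * (ρhat μ φ)⁻¹
        = ((κ.re : ℍ) + (κ.im : ℍ) * J - n) * ((α.re : ℍ) + (α.im : ℍ) * J)
          * ((κ.re : ℍ) + (κ.im : ℍ) * J - n) := by
      rw [hT, hXform, ← hρJ]
      rw [show ((κ.re:ℍ) + (κ.im:ℍ)*J - n) * ρhat μ φ * (((κ.re:ℍ) + (κ.im:ℍ)*J - n) * ρhat μ φ)
          * (ρhat μ φ)⁻¹
        = ((κ.re:ℍ) + (κ.im:ℍ)*J - n) * ρhat μ φ * ((κ.re:ℍ) + (κ.im:ℍ)*J - n)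
          * (ρhat μ φ * (ρhat μ φ)⁻¹) by simp only [mul_assoc]]
      rw [mul_inv_cancel₀ hρ0, mul_one]
    rw [hTT]
    exact comm_key J n hJr hre hJ2 hn2 κ.re κ.im α.re α.im h0
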